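/- For natural numbers n, d, j with d ≥ 1 and j ≥ d, the alternating sum ∑_{r=0}^{d-1} (-1)^{(d-1)-r} C(n,r) C(n-r, j-r) equals C(n,j) C(j-1, d-1). -/

import Mathlib

lemma alt_partial_sum_choose (j : ℕ) (hj : 1 ≤ j) (m : ℕ) :
    ∑ r ∈ Finset.range (m + 1), (-1 : ℤ) ^ (m - r) * (j.choose r) =
      ((j - 1).choose m : ℤ) := by
  induction m with
  | zero => simp
  | succ m ih =>
    rw [Finset.sum_range_succ]
    have hsign : ∀ r ∈ Finset.range (m + 1),
        (-1 : ℤ) ^ (m + 1 - r) * (j.choose r) =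
        (-1) * ((-1 : ℤ) ^ (m - r) * (j.choose r)) := by
      intro r hr
      rw [Finset.mem_range] at hr
      have : m + 1 - r = (m - r) + 1 := by omega
      rw [this, pow_succ]
      ring
    rw [Finset.sum_congr rfl hsign, ← Finset.mul_sum, ih]
    have hpascal : (j - 1).choose m + (j - 1).choose (m + 1) = j.choose (m + 1) := by
      have h1 : j - 1 + 1 = j := by omega
      rw [← h1, Nat.choose_succ_succ, Nat.add_sub_cancel]
    have : ((j - 1).choose m : ℤ) + (j - 1).choose (m + 1) = j.choose (m + 1) := by
      exact_mod_cast congrArg (Nat.cast : ℕ → ℤ) hpascal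
    simp only [Nat.sub_self, pow_zero, one_mul]
    linarith

/-- For naturals `n, d, j` with `d ≥ 1` and `j ≥ d`, the alternating sum
`∑_{r=0}^{d-1} (-1)^{(d-1)-r} C(n,r) C(n-r, j-r)` equals `C(n,j) C(j-1, d-1)`. -/
theorem alternating_sum_choose_eq (n d j : ℕ) (hd : 1 ≤ d) (hj : d ≤ j) :
    ∑ r ∈ Finset.range d,
      (-1 : ℤ) ^ (d - 1 - r) * (n.choose r) * ((n - r).choose (j - r)) =
    (n.choose j) * ((j - 1).choose (d - 1)) := by
  have hterm : ∀ r ∈ Finset.range d,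
      (-1 : ℤ) ^ (d - 1 - r) * (n.choose r) * ((n - r).choose (j - r)) =
      (n.choose j : ℤ) * ((-1 : ℤ) ^ (d - 1 - r) * (j.choose r)) := by
    intro r hr
    rw [Finset.mem_range] at hr
    have hrj : r ≤ j := by omega
    have key : n.choose r * (n - r).choose (j - r) = n.choose j * j.choose r := by
      rcases le_or_gt j n with h | h
      · exact (Nat.choose_mul hrj).symm
      · rcases le_or_gt r n with h2 | h2
        · rw [Nat.choose_eq_zero_of_lt h, Nat.choose_eq_zero_of_lt (show n - r < j - r by omega)]
          simp
        · rw [Nat.choose_eq_zero_of_lt h, Nat.choose_eq_zero_of_lt h2]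
          simp
    have : ((n.choose r : ℤ)) * ((n - r).choose (j - r)) =
        (n.choose j : ℤ) * (j.choose r) := by exact_mod_cast key
    calc (-1 : ℤ) ^ (d - 1 - r) * (n.choose r) * ((n - r).choose (j - r))
        = (-1 : ℤ) ^ (d - 1 - r) * ((n.choose r : ℤ) * ((n - r).choose (j - r))) := by ring
      _ = (-1 : ℤ) ^ (d - 1 - r) * ((n.choose j : ℤ) * (j.choose r)) := by rw [this]
      _ = (n.choose j : ℤ) * ((-1 : ℤ) ^ (d - 1 - r) * (j.choose r)) := by ring
  rw [Finset.sum_congr rfl hterm, ← Finset.mul_sum]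
  have hd' : d = (d - 1) + 1 := by omega
  rw [hd', Nat.add_sub_cancel, alt_partial_sum_choose j (by omega) (d - 1)]
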